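/- Let A be a basic artin algebra and S a simple projective A-module. If I is an indecomposable injective A-module not isomorphic to the injective envelope I₀(S) of S, then Hom_A(I, I₀(S)) = 0. -/

import Mathlib

open MulOpposite

/-- An indecomposable module. -/
def IsIndecomposableModule (A : Type) [Ring A] (M : Type) [AddCommGroup M] [Module A M] : Prop :=
  Nontrivial M ∧ ∀ N N' : Submodule A M, IsCompl N N' → N = ⊥ ∨ N' = ⊥

/-- Projective dimension at most `n`. -/
def pdLE (A : Type) [Ring A] : ℕ → (M : Type) → [AddCommGroup M] → [Module A M] → Prop
  | 0, M, _, _ => Module.Projective A M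
  | n+1, M, _, _ =>
      ∃ (P : Type) (_ : AddCommGroup P) (_ : Module A P) (f : P →ₗ[A] M),
        Module.Projective A P ∧ Function.Surjective f ∧ pdLE A n (LinearMap.ker f)

/-- Global dimension (on finitely generated modules) at most `n`. -/
def gldimLE (A : Type) [Ring A] (n : ℕ) : Prop :=
  ∀ (M : Type) [AddCommGroup M] [Module A M], Module.Finite A M → pdLE A n M

/-- `i : S →ₗ[A] E` exhibits `E` as an injective envelope of `S`. -/
structure IsInjectiveEnvelope (A : Type) [Ring A] {S E : Type}
    [AddCommGroup S] [Module A S] [AddCommGroup E] [Module A E]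
    (i : S →ₗ[A] E) : Prop where
  injective_module : Module.Injective A E
  inj : Function.Injective i
  essential : ∀ N : Submodule A E, N ≠ ⊥ → N ⊓ LinearMap.range i ≠ ⊥

/-- A basic algebra: indecomposable projective direct summands of the regular module
are pairwise nonisomorphic. -/
def IsBasicAlgebra (A : Type) [Ring A] : Prop :=
  ∀ P Q : Submodule A A, (∃ P', IsCompl P P') → (∃ Q', IsCompl Q Q') →
    IsIndecomposableModule A P → IsIndecomposableModule A Q →
    Nonempty (P ≃ₗ[A] Q) → P = Q

/-- `M` is a direct summand of a finite direct sum of copies of `P`. -/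
def IsInAdd (A : Type) [Ring A] (P : Type) [AddCommGroup P] [Module A P]
    (M : Type) [AddCommGroup M] [Module A M] : Prop :=
  ∃ (n : ℕ) (f : M →ₗ[A] (Fin n → P)) (g : (Fin n → P) →ₗ[A] M),
    g ∘ₗ f = LinearMap.id

/-- An almost split (Auslander–Reiten) sequence `0 → N → E → X → 0`. -/
def IsAlmostSplitSequence (A : Type) [Ring A] {N E X : Type}
    [AddCommGroup N] [Module A N] [AddCommGroup E] [Module A E]
    [AddCommGroup X] [Module A X]
    (f : N →ₗ[A] E) (g : E →ₗ[A] X) : Prop :=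
  Function.Injective f ∧ Function.Surjective g ∧
    LinearMap.range f = LinearMap.ker g ∧
    (¬ ∃ s : X →ₗ[A] E, g ∘ₗ s = LinearMap.id) ∧
    IsIndecomposableModule A N ∧ IsIndecomposableModule A X ∧
    (∀ (Y : Type) [AddCommGroup Y] [Module A Y] (h : Y →ₗ[A] X),
      (¬ ∃ s : X →ₗ[A] Y, h ∘ₗ s = LinearMap.id) → ∃ h' : Y →ₗ[A] E, g ∘ₗ h' = h)

/-- `M` is an inverse Auslander–Reiten translate of `N`. -/
def IsTauInverseOf (A : Type) [Ring A] (N : Type) [AddCommGroup N] [Module A N]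
    (M : Type) [AddCommGroup M] [Module A M] : Prop :=
  ∃ (E : Type) (_ : AddCommGroup E) (_ : Module A E)
    (f : N →ₗ[A] E) (g : E →ₗ[A] M), IsAlmostSplitSequence A f g

/-- `N` is an Auslander–Reiten translate of `M`. -/
def IsTauOf (A : Type) [Ring A] (M : Type) [AddCommGroup M] [Module A M]
    (N : Type) [AddCommGroup N] [Module A N] : Prop :=
  ∃ (E : Type) (_ : AddCommGroup E) (_ : Module A E)
    (f : N →ₗ[A] E) (g : E →ₗ[A] M), IsAlmostSplitSequence A f g

/-- A tilting module (Bongartz characterization). -/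
def IsTiltingModule (A : Type) [Ring A] (T : Type) [AddCommGroup T] [Module A T] : Prop :=
  pdLE A 1 T ∧
  (∀ (X : Type) [AddCommGroup X] [Module A X] (f : T →ₗ[A] X) (g : X →ₗ[A] T),
      Function.Injective f → Function.Surjective g → LinearMap.range f = LinearMap.ker g →
      ∃ s : T →ₗ[A] X, g ∘ₗ s = LinearMap.id) ∧
  (∃ (T₀ T₁ : Type) (_ : AddCommGroup T₀) (_ : Module A T₀)
      (_ : AddCommGroup T₁) (_ : Module A T₁)
      (i : A →ₗ[A] T₀) (p : T₀ →ₗ[A] T₁),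
      IsInAdd A T T₀ ∧ IsInAdd A T T₁ ∧
      Function.Injective i ∧ Function.Surjective p ∧ LinearMap.range i = LinearMap.ker p)

/-- A basic (multiplicity-free) module. -/
def IsBasicModule (A : Type) [Ring A] (M : Type) [AddCommGroup M] [Module A M] : Prop :=
  ∀ (X Y : Type) (_ : AddCommGroup X) (_ : Module A X) (_ : AddCommGroup Y) (_ : Module A Y),
    IsIndecomposableModule A X → ¬ Nonempty (M ≃ₗ[A] (X × X × Y))

/-- The socle of a module. -/
def socl (A : Type) [Ring A] (M : Type) [AddCommGroup M] [Module A M] : Submodule A M :=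
  sSup {N : Submodule A M | IsAtom N}

/-- Over a basic artin algebra `A`, if `S` is a simple projective module,
`E` an injective envelope of `S` and `I` an indecomposable injective module not isomorphic
to `E`, then `Hom_A(I, E) = 0`. -/
theorem hom_indec_injective_to_envelope_of_simple_projective_eq_zero
    (R A : Type) [CommRing R] [IsArtinianRing R] [Ring A] [Algebra R A] [Module.Finite R A]
    (hbasic : IsBasicAlgebra A)
    (S : Type) [AddCommGroup S] [Module A S]
    (hS : IsSimpleModule A S) (hSproj : Module.Projective A S)
    (E : Type) [AddCommGroup E] [Module A E]
    (i : S →ₗ[A] E) (hE : IsInjectiveEnvelope A i)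
    (I : Type) [AddCommGroup I] [Module A I] [Module.Finite A I]
    (hIinj : Module.Injective A I) (hIindec : IsIndecomposableModule A I)
    (hne : IsEmpty (I ≃ₗ[A] E)) :
    ∀ f : I →ₗ[A] E, f = 0 := by
  intro f
  by_contra hf
  obtain ⟨hEinj, hiinj, hess⟩ := hE
  haveI : Nontrivial S := by
    haveI := hS
    rcases (IsSimpleOrder.bot_ne_top (α := Submodule A S)) with h
    by_contra hnt
    rw [not_nontrivial_iff_subsingleton] at hnt
    exact h (Subsingleton.elim _ _)
  -- Step 1: range i ≤ range f
  have hrf : LinearMap.range f ≠ ⊥ := fun h => hf (LinearMap.range_eq_bot.mp h)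
  have hatom : IsAtom (LinearMap.range i) := by
    rw [← isSimpleModule_iff_isAtom]
    exact IsSimpleModule.congr (LinearEquiv.ofInjective i hiinj).symm
  have hle : LinearMap.range i ≤ LinearMap.range f := by
    by_contra hnle
    have hlt : LinearMap.range f ⊓ LinearMap.range i < LinearMap.range i :=
      lt_of_le_of_ne inf_le_right (fun heq => hnle (inf_eq_right.mp heq))
    exact hess _ hrf (hatom.2 _ hlt)
  -- Step 2: lift i through f using projectivity of S, getting s : S → I with f ∘ s = i
  set N := LinearMap.range i with hN
  have hmem : ∀ c : ↥(Submodule.comap f N), f ((Submodule.comap f N).subtype c) ∈ N :=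
    fun c => c.2
  set F : ↥(Submodule.comap f N) →ₗ[A] ↥N :=
    LinearMap.codRestrict N (f ∘ₗ (Submodule.comap f N).subtype) hmem with hF
  have hFsurj : Function.Surjective F := by
    rintro ⟨y, hy⟩
    obtain ⟨x, hx⟩ := hle hy
    refine ⟨⟨x, by simpa [N, Submodule.mem_comap, hx] using hy⟩, ?_⟩
    apply Subtype.ext
    simpa [F] using hx
  obtain ⟨t, ht⟩ := Module.projective_lifting_property F
    (LinearMap.codRestrict N i (fun x => ⟨x, rfl⟩)) hFsurj
  set s : S →ₗ[A] I := (Submodule.comap f N).subtype ∘ₗ t with hs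
  have hfs : ∀ x, f (s x) = i x := by
    intro x
    have := congrArg (fun m : S →ₗ[A] ↥N => ((m x : ↥N) : E)) ht
    exact this
  -- Step 3: extend s along i using injectivity of I, getting h : E → I with h ∘ i = s
  obtain ⟨h, hh⟩ := hIinj.out i hiinj s
  set u : E →ₗ[A] E := f ∘ₗ h with hu
  have hui : ∀ x, u (i x) = i x := by intro x; simp [u, hh, hfs]
  have hker : LinearMap.ker u = ⊥ := by
    by_contra hk
    apply hess _ hk
    rw [eq_bot_iff]
    rintro x ⟨hx1, y, rfl⟩
    have : u (i y) = 0 := hx1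
    rw [hui] at this
    simp [this]
  have huinj : Function.Injective u := LinearMap.ker_eq_bot.mp hker
  -- Step 4: u is surjective
  obtain ⟨v, hv⟩ := hEinj.out u huinj LinearMap.id
  have husurj : Function.Surjective u := by
    have hpker : LinearMap.ker (u ∘ₗ v) = ⊥ := by
      by_contra hk
      apply hess _ hk
      rw [eq_bot_iff]
      rintro x ⟨hx1, y, rfl⟩
      have h1 : u (v (i y)) = 0 := hx1
      have h2 : v (i y) = i y := by
        conv_lhs => rw [← hui y]
        exact hv (i y)
      rw [h2, hui] at h1
      simp [h1]
    have hpinj : Function.Injective (u ∘ₗ v) := LinearMap.ker_eq_bot.mp hpker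
    intro x
    refine ⟨v x, ?_⟩
    have : (u ∘ₗ v) ((u ∘ₗ v) x) = (u ∘ₗ v) x := by
      simp [LinearMap.comp_apply, hv]
    exact hpinj this
  set ue : E ≃ₗ[A] E := LinearEquiv.ofBijective u ⟨huinj, husurj⟩ with hue
  have hue_symm_u : ∀ x, ue.symm (u x) = x := fun x =>
    ue.symm_apply_apply x
  -- Step 5: idempotent e on I
  set e : I →ₗ[A] I := h ∘ₗ (ue.symm : E →ₗ[A] E) ∘ₗ f with he
  have heh : ∀ x, e (h x) = h x := by
    intro x
    have : f (h x) = u x := rfl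
    simp [e, this, hue_symm_u]
  have hee : ∀ x, e (e x) = e x := fun x => heh (ue.symm (f x))
  have hcompl : IsCompl (LinearMap.range e) (LinearMap.ker e) := by
    constructor
    · rw [disjoint_iff]
      rw [eq_bot_iff]
      rintro x ⟨⟨y, rfl⟩, hx2⟩
      have : e (e y) = 0 := hx2
      rw [hee] at this
      simp [this]
    · rw [codisjoint_iff, eq_top_iff]
      intro x _
      rw [Submodule.mem_sup]
      exact ⟨e x, ⟨x, rfl⟩, x - e x, by simp [LinearMap.mem_ker, hee], by abel⟩
  obtain ⟨s₀, hs₀⟩ := exists_ne (0 : S)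
  have hss₀ : s s₀ ≠ 0 := by
    intro hz
    apply hs₀
    apply hiinj
    rw [← hfs, hz, map_zero, map_zero]
  rcases hIindec.2 _ _ hcompl with hbot | hbot
  · -- range e = ⊥ : impossible
    have hmem : s s₀ ∈ LinearMap.range e := ⟨h (i s₀), by rw [heh, hh]⟩
    rw [hbot] at hmem
    exact hss₀ (by simpa using hmem)
  · -- ker e = ⊥ : then e = id, h is an isomorphism
    have heinj : Function.Injective e := LinearMap.ker_eq_bot.mp hbot
    have heid : ∀ x, e x = x := fun x => heinj (hee x)
    have hhinj : Function.Injective h := by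
      intro a b hab
      apply huinj
      show f (h a) = f (h b)
      rw [hab]
    have hhsurj : Function.Surjective h := by
      intro x
      exact ⟨ue.symm (f x), (show h (ue.symm (f x)) = e x from rfl).trans (heid x)⟩
    exact hne.false (LinearEquiv.ofBijective h ⟨hhinj, hhsurj⟩).symm
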